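/- Let (P,R) be a finite simple graph, let g : R → ℝ assign a positive desire growth rate to each edge, and let h > 0 be a real number with g(e) ≤ h for every edge e. Define frequencies f : R → ℕ by f(e) = ⌊h / g(e)⌋ (so f(e) ≥ 1). Then: (i) every schedule S that is valid for the DPS instance (P,R,f) is a valid schedule for the OPS instance (P,R,g) with heat h(S) ≤ h; and (ii) every schedule S whose heat for the OPS instance (P,R,g) is strictly greater than h is not a valid schedule for the DPS instance (P,R,f). -/
import Mathlib


open scoped ENNReal BigOperators

namespace PolySched

variable {V : Type*}

/-- A set of edges is a matching in `G`: all edges belong to `G` and no two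
distinct edges share an endpoint. -/
def IsMatchingIn (G : SimpleGraph V) (M : Set (Sym2 V)) : Prop :=
  M ⊆ G.edgeSet ∧ M.Pairwise fun e e' => ∀ v, v ∈ e → v ∉ e'

/-- A schedule is valid for the OPS instance on `G` if each day is a matching. -/
def OPSValid (G : SimpleGraph V) (S : ℕ → Set (Sym2 V)) : Prop :=
  ∀ t, IsMatchingIn G (S t)

/-- A schedule is valid for the DPS instance `(G, f)`. -/
def DPSValid (G : SimpleGraph V) (f : Sym2 V → ℕ) (S : ℕ → Set (Sym2 V)) : Prop :=
  OPSValid G S ∧ ∀ e ∈ G.edgeSet, ∀ t : ℕ, ∃ i < f e, e ∈ S (t + i)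

/-- Recurrence time of edge `e` under schedule `S`: the supremum of `d+1` over
all `d` such that some window of `d` consecutive days misses `e`. -/
noncomputable def recTime (S : ℕ → Set (Sym2 V)) (e : Sym2 V) : ℝ≥0∞ :=
  ⨆ d ∈ {d : ℕ | ∃ t : ℕ, ∀ i < d, e ∉ S (t + i)}, ((d : ℝ≥0∞) + 1)

/-- Heat of a schedule for the OPS instance `(G, g)`. -/
noncomputable def heat (G : SimpleGraph V) (g : Sym2 V → ℝ) (S : ℕ → Set (Sym2 V)) : ℝ≥0∞ :=
  ⨆ e ∈ G.edgeSet, ENNReal.ofReal (g e) * recTime S e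
/-- OPS-to-DPS conversion (Lemma "OPS to DPS").
With frequencies `f e = ⌊h / g e⌋`, (i) any valid DPS schedule is a valid OPS
schedule of heat at most `h`; (ii) any schedule with OPS heat `> h` is not
valid for the DPS instance. -/
theorem ops_to_dps {V : Type*} (G : SimpleGraph V) (g : Sym2 V → ℝ) (h : ℝ)
    (hg : ∀ e ∈ G.edgeSet, 0 < g e) (hh : 0 < h)
    (hgh : ∀ e ∈ G.edgeSet, g e ≤ h)
    (f : Sym2 V → ℕ) (hf : ∀ e ∈ G.edgeSet, f e = ⌊h / g e⌋₊) :
    (∀ S : ℕ → Set (Sym2 V), DPSValid G f S →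
        OPSValid G S ∧ heat G g S ≤ ENNReal.ofReal h) ∧
    (∀ S : ℕ → Set (Sym2 V), ENNReal.ofReal h < heat G g S → ¬ DPSValid G f S) := by
  have part1 : ∀ S : ℕ → Set (Sym2 V), DPSValid G f S →
      OPSValid G S ∧ heat G g S ≤ ENNReal.ofReal h := by
    intro S hS
    refine ⟨hS.1, ?_⟩
    rw [heat]
    refine iSup₂_le fun e he => ?_
    have hge := hg e he
    have hfe : (f e : ℝ) ≤ h / g e := by
      rw [hf e he]; exact Nat.floor_le (by positivity)
    have hrec : recTime S e ≤ (f e : ℝ≥0∞) := by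
      refine iSup₂_le fun d hd => ?_
      obtain ⟨t, ht⟩ := hd
      have hdlt : d < f e := by
        by_contra hcon
        push_neg at hcon
        obtain ⟨i, hi, hmem⟩ := hS.2 e he t
        exact ht i (lt_of_lt_of_le hi hcon) hmem
      exact_mod_cast Nat.succ_le_of_lt hdlt
    calc ENNReal.ofReal (g e) * recTime S e
        ≤ ENNReal.ofReal (g e) * (f e : ℝ≥0∞) := by gcongr
      _ = ENNReal.ofReal (g e * f e) := by
          rw [ENNReal.ofReal_mul hge.le, ENNReal.ofReal_natCast]
      _ ≤ ENNReal.ofReal h := by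
          apply ENNReal.ofReal_le_ofReal
          calc g e * (f e : ℝ) ≤ g e * (h / g e) := by
                exact mul_le_mul_of_nonneg_left hfe hge.le
            _ = h := by field_simp
  refine ⟨part1, fun S hlt hDPS => ?_⟩
  exact absurd (part1 S hDPS).2 (not_le.mpr hlt)

end PolySched
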